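/- If v₀, v₁ satisfy the ODE system D·v₀''(x) = β·v₀(x) − α·v₁(x) and D·v₁''(x) = α·v₁(x) − β·v₀(x) on [0, L] together with the Neumann conditions v₀'(0) = 0 and v₁'(0) = 0 (the boundary conditions at x = L are not needed), then the sum v₀ + v₁ is constant on [0, L]: there exists K ∈ ℝ with v₀(x) + v₁(x) = K for all x ∈ [0, L]. (This is the paper's claim in Example 2.1 that the large-time mean neurotransmitter concentration is constant in space.) -/

import Mathlib

/-- For the neurotransmitter model, the ODE system together with the
Neumann conditions at `x = 0` forces `v₀ + v₁` to be constant on `[0, L]`. -/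
theorem neurotransmitter_mean_sum_constant
    (L D α β c : ℝ) (hL : 0 < L) (hD : 0 < D) (hα : 0 < α) (hβ : 0 < β) (hc : 0 < c)
    (v₀ v₁ : ℝ → ℝ) (a b : ℝ) (ha : a < 0) (hb : L < b)
    (hreg0 : ContDiffOn ℝ 2 v₀ (Set.Ioo a b))
    (hreg1 : ContDiffOn ℝ 2 v₁ (Set.Ioo a b))
    (hode0 : ∀ x ∈ Set.Icc (0:ℝ) L, D * deriv (deriv v₀) x = β * v₀ x - α * v₁ x)
    (hode1 : ∀ x ∈ Set.Icc (0:ℝ) L, D * deriv (deriv v₁) x = α * v₁ x - β * v₀ x)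
    (hbc0 : deriv v₀ 0 = 0) (hbc1 : deriv v₁ 0 = 0) :
    ∃ K : ℝ, ∀ x ∈ Set.Icc (0:ℝ) L, v₀ x + v₁ x = K := by
  have hsub : Set.Icc (0:ℝ) L ⊆ Set.Ioo a b := fun x hx =>
    ⟨lt_of_lt_of_le ha hx.1, lt_of_le_of_lt hx.2 hb⟩
  have hopen : IsOpen (Set.Ioo a b) := isOpen_Ioo
  -- deriv v₀, deriv v₁ are C¹ on Ioo a b
  have hd0 : ContDiffOn ℝ 1 (deriv v₀) (Set.Ioo a b) :=
    hreg0.deriv_of_isOpen hopen (by norm_num)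
  have hd1 : ContDiffOn ℝ 1 (deriv v₁) (Set.Ioo a b) :=
    hreg1.deriv_of_isOpen hopen (by norm_num)
  have hdd0 : ∀ x ∈ Set.Ioo a b, HasDerivAt (deriv v₀) (deriv (deriv v₀) x) x := by
    intro x hx
    exact (((hd0.differentiableOn one_ne_zero) x hx).differentiableAt
      (hopen.mem_nhds hx)).hasDerivAt
  have hdd1 : ∀ x ∈ Set.Ioo a b, HasDerivAt (deriv v₁) (deriv (deriv v₁) x) x := by
    intro x hx
    exact (((hd1.differentiableOn one_ne_zero) x hx).differentiableAt
      (hopen.mem_nhds hx)).hasDerivAt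
  set g : ℝ → ℝ := fun x => deriv v₀ x + deriv v₁ x with hg
  -- g has derivative zero on Icc 0 L
  have hg0 : ∀ x ∈ Set.Icc (0:ℝ) L, HasDerivAt g 0 x := by
    intro x hx
    have h := (hdd0 x (hsub hx)).add (hdd1 x (hsub hx))
    have hz : deriv (deriv v₀) x + deriv (deriv v₁) x = 0 := by
      have e0 := hode0 x hx
      have e1 := hode1 x hx
      have : D * (deriv (deriv v₀) x + deriv (deriv v₁) x) = 0 := by
        rw [mul_add, e0, e1]; ring
      have := mul_eq_zero.mp this
      rcases this with h | h
      · exact absurd h hD.ne'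
      · exact h
    rw [hz] at h; exact h
  have hgcont : ContinuousOn g (Set.Icc (0:ℝ) L) := by
    apply ContinuousOn.add
    · exact ((hd0.continuousOn).mono hsub)
    · exact ((hd1.continuousOn).mono hsub)
  have hgconst : ∀ x ∈ Set.Icc (0:ℝ) L, g x = g 0 := by
    apply constant_of_has_deriv_right_zero hgcont
    intro x hx
    exact (hg0 x ⟨hx.1, le_of_lt hx.2⟩).hasDerivWithinAt
  have hgzero : ∀ x ∈ Set.Icc (0:ℝ) L, g x = 0 := by
    intro x hx
    rw [hgconst x hx]
    simp [hg, hbc0, hbc1]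
  -- now w = v₀ + v₁ has derivative g x = 0 on Icc
  set w : ℝ → ℝ := fun x => v₀ x + v₁ x with hw
  have hw0 : ∀ x ∈ Set.Icc (0:ℝ) L, HasDerivAt w 0 x := by
    intro x hx
    have h0 : HasDerivAt v₀ (deriv v₀ x) x :=
      ((hreg0.differentiableOn (by norm_num) x (hsub hx)).differentiableAt
        (hopen.mem_nhds (hsub hx))).hasDerivAt
    have h1 : HasDerivAt v₁ (deriv v₁ x) x :=
      ((hreg1.differentiableOn (by norm_num) x (hsub hx)).differentiableAt
        (hopen.mem_nhds (hsub hx))).hasDerivAt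
    have := h0.add h1
    have hz := hgzero x hx
    simp only [hg] at hz
    rw [hz] at this; exact this
  have hwcont : ContinuousOn w (Set.Icc (0:ℝ) L) := by
    apply ContinuousOn.add
    · exact ((hreg0.continuousOn).mono hsub)
    · exact ((hreg1.continuousOn).mono hsub)
  have hwconst : ∀ x ∈ Set.Icc (0:ℝ) L, w x = w 0 := by
    apply constant_of_has_deriv_right_zero hwcont
    intro x hx
    exact (hw0 x ⟨hx.1, le_of_lt hx.2⟩).hasDerivWithinAt
  exact ⟨w 0, fun x hx => hwconst x hx⟩
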